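/- Let e ≥ 3 be odd and t ≥ 0, c = (t + (1−e)/2, 0). Suppose μ is a bipartition such that the symbol 𝔅(μ, c) is totally e-periodic. Then the e-core of the partition Φ_t(μ) is a 2-core, i.e., equals Δ_s for some s ≥ 0. -/

import Mathlib

/-- A *1-runner abacus* is a subset `𝔄 ⊆ ℤ` such that for some positive integer `n`,
`−j ∈ 𝔄` and `j ∉ 𝔄` for all `j ≥ n`. -/
def IsAbacus (A : Set ℤ) : Prop :=
  ∃ n : ℕ, 0 < n ∧ ∀ j : ℤ, (n : ℤ) ≤ j → (-j ∈ A ∧ j ∉ A)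

/-- The `j`-th largest element (0-indexed) of a 1-runner abacus: the unique `x ∈ A`
with exactly `j` elements of `A` above it. -/
noncomputable def abacusBead (A : Set ℤ) (j : ℕ) : ℤ :=
  sSup {x | x ∈ A ∧ {y | y ∈ A ∧ x < y}.ncard = j}

/-- The partition associated to a 1-runner abacus: its `j`-th part (0-indexed) is the
number of holes (integers not in `A`) below the `j`-th largest element of `A`. -/
noncomputable def abacusPartition (A : Set ℤ) (j : ℕ) : ℕ :=
  {y | y < abacusBead A j ∧ y ∉ A}.ncard

/-- The charge of a 1-runner abacus: `a₁ − λ₁`. -/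
noncomputable def abacusCharge (A : Set ℤ) : ℤ :=
  abacusBead A 0 - (abacusPartition A 0 : ℤ)


/-- The partition associated to a β-set `B = {b₁ > b₂ > ⋯ > b_k} ⊆ ℕ`: its `j`-th part
(0-indexed) is `b_{j+1} − (k − 1 − j)`. -/
def betaToPart (B : Finset ℕ) (j : ℕ) : ℕ :=
  if j < B.card then (B.sort (· ≤ ·)).getD (B.card - 1 - j) 0 - (B.card - 1 - j) else 0

/-- Removing an `e`-hook from the partition with β-set `B`: replace an element
`y ∈ B` with `y ≥ e` and `y − e ∉ B` by `y − e`. -/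
def hookRel (e : ℕ) (B B' : Finset ℕ) : Prop :=
  ∃ y ∈ B, e ≤ y ∧ y - e ∉ B ∧ B' = insert (y - e) (B.erase y)

/-- A β-set has no removable `e`-hook. -/
def NoEHook (e : ℕ) (C : Finset ℕ) : Prop := ∀ y ∈ C, e ≤ y → y - e ∈ C

/-- The staircase partition `Δ_t = (t, t−1, ..., 1)`, as a function. -/
def stair (t : ℕ) : ℕ → ℕ := fun j => t - j

/-- The partition with β-set `B` has `e`-core equal to `core`: some sequence of
`e`-hook removals starting from `B` reaches a β-set with no `e`-hook whose associated
partition is `core`. -/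
def HasECore (e : ℕ) (B : Finset ℕ) (core : ℕ → ℕ) : Prop :=
  ∃ C : Finset ℕ, Relation.ReflTransGen (hookRel e) B C ∧ NoEHook e C ∧ betaToPart C = core


/-- A symbol `(B1, B2)` (a pair of 1-runner abaci, given as subsets of `ℤ`) is
*totally `e`-periodic* if successively removing `e`-periods terminates in the symbol
of the empty bipartition (whose rows are of the form `{x : x ≤ c}`). An `e`-period
consists of the `e` consecutive values `M, M−1, ..., M−e+1`, where `M` is the largest
entry of `B1 ∪ B2`, each value read in the first row whenever it lies there, and the
row indices being non-increasing along the period (entries read in the first row come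
after those read in the second). Removing the period deletes from `B1` all its values
lying in `(M−e, M]`, and from `B2` those values in `(M−e, M]` not lying in `B1`. -/
inductive TotallyPeriodic (e : ℕ) : Set ℤ → Set ℤ → Prop
  | base (c1 c2 : ℤ) : TotallyPeriodic e {x | x ≤ c1} {x | x ≤ c2}
  | step (B1 B2 : Set ℤ) (M : ℤ)
      (hM : M ∈ B1 ∪ B2) (hub : ∀ x ∈ B1 ∪ B2, x ≤ M)
      (hper : ∀ l : ℕ, l < e → (M - l) ∈ B1 ∪ B2)
      (hrow : ∀ l l' : ℕ, l < l' → l' < e → (M - l) ∈ B1 → (M - l') ∈ B1)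
      (ih : TotallyPeriodic e (B1 \ Set.Ioc (M - e) M) (B2 \ (Set.Ioc (M - e) M \ B1))) :
      TotallyPeriodic e B1 B2


/-- The row of the symbol of a charged bipartition determined by a partition `f` and a
charge `c`: the 1-runner abacus `{f_j − j + c + 1 : j ≥ 1}` (here `f` is 0-indexed). -/
def symbolRow (f : ℕ → ℕ) (c : ℤ) : Set ℤ :=
  {x | ∃ j : ℕ, x = (f j : ℤ) - ((j : ℤ) + 1) + c + 1}

/-- The 1-runner abacus `𝔄_e(μ, c) = {2j + e : j ∈ 𝔅¹} ∪ {2j : j ∈ 𝔅²}` obtained by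
interleaving the two rows of a symbol. -/
def abacusE (e : ℕ) (B1 B2 : Set ℤ) : Set ℤ :=
  {y | ∃ j ∈ B1, y = 2 * j + (e : ℤ)} ∪ {y | ∃ j ∈ B2, y = 2 * j}

/-- `f : ℕ → ℕ` is a partition: weakly decreasing with finite support. -/
def IsPartitionFun (f : ℕ → ℕ) : Prop := Antitone f ∧ ∃ N, ∀ j, N ≤ j → f j = 0

namespace StmtAux
open Finset

open Finset

lemma sub_mod_self {e y : ℕ} (h : e ≤ y) : (y - e) % e = y % e := by
  conv_rhs => rw [← Nat.sub_add_cancel h]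
  rw [Nat.add_mod_right]

lemma sub_div_self {e y : ℕ} (he : 0 < e) (h : e ≤ y) : y / e = (y - e) / e + 1 := by
  conv_lhs => rw [← Nat.sub_add_cancel h]
  rw [Nat.add_div_right _ he]

lemma eq_of_div_mod {e a b : ℕ} (hd : a / e = b / e) (hm : a % e = b % e) : a = b := by
  have ha' := Nat.div_add_mod a e
  have hb' := Nat.div_add_mod b e
  rw [hd, hm] at ha'
  exact ha'.symm.trans hb'

/-- number of elements of `B` congruent to `i` mod `e`. -/
def cnt (e : ℕ) (B : Finset ℕ) (i : ℕ) : ℕ := (B.filter (fun x => x % e = i)).card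

/-- the canonical `e`-core β-set with runner counts `n`. -/
def coreOfCounts (e : ℕ) (n : ℕ → ℕ) : Finset ℕ :=
  (Finset.range e).biUnion (fun i => (Finset.range (n i)).image (fun k => i + e * k))

lemma mem_coreOfCounts {e : ℕ} (he : 0 < e) {n : ℕ → ℕ} {x : ℕ} :
    x ∈ coreOfCounts e n ↔ x / e < n (x % e) := by
  constructor
  · intro h
    simp only [coreOfCounts, Finset.mem_biUnion, Finset.mem_range, Finset.mem_image] at h
    obtain ⟨i, hi, k, hk, rfl⟩ := h
    rw [Nat.add_mul_mod_self_left, Nat.mod_eq_of_lt hi, Nat.add_mul_div_left _ _ he,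
      Nat.div_eq_of_lt hi, Nat.zero_add]
    exact hk
  · intro h
    simp only [coreOfCounts, Finset.mem_biUnion, Finset.mem_range, Finset.mem_image]
    exact ⟨x % e, Nat.mod_lt _ he, x / e, h, by rw [Nat.mod_add_div]⟩

lemma coreOfCounts_congr {e : ℕ} (he : 0 < e) {n n' : ℕ → ℕ} (h : ∀ i < e, n i = n' i) :
    coreOfCounts e n = coreOfCounts e n' := by
  ext x
  rw [mem_coreOfCounts he, mem_coreOfCounts he, h _ (Nat.mod_lt _ he)]

lemma noEHook_coreOfCounts {e : ℕ} (he : 0 < e) (n : ℕ → ℕ) :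
    NoEHook e (coreOfCounts e n) := by
  intro y hy hey
  rw [mem_coreOfCounts he] at hy ⊢
  rw [sub_mod_self hey]
  have h3 := sub_div_self he hey
  omega
lemma downward_eq_range {S : Finset ℕ} (h : ∀ k, k + 1 ∈ S → k ∈ S) :
    S = Finset.range S.card := by
  have hd : ∀ k, k ∈ S → ∀ j, j ≤ k → j ∈ S := by
    intro k
    induction k with
    | zero =>
      intro hk j hj
      rwa [Nat.le_zero.mp hj]
    | succ k ih =>
      intro hk j hj
      rcases Nat.eq_or_lt_of_le hj with rfl | hlt
      · exact hk
      · exact ih (h k hk) j (by omega)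
  rcases S.eq_empty_or_nonempty with rfl | hne
  · simp
  · have hmax := S.max'_mem hne
    have hsub : S ⊆ Finset.range (S.max' hne + 1) := by
      intro x hx; rw [Finset.mem_range]; exact Nat.lt_succ_of_le (S.le_max' x hx)
    have hsub2 : Finset.range (S.max' hne + 1) ⊆ S := by
      intro x hx; rw [Finset.mem_range] at hx
      exact hd _ hmax x (by omega)
    have : S = Finset.range (S.max' hne + 1) := Finset.Subset.antisymm hsub hsub2
    rw [this, Finset.card_range]

lemma filter_mod_eq {e : ℕ} (he : 0 < e) (C : Finset ℕ) (i : ℕ) :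
    C.filter (fun y => y % e = i) = ((C.filter (fun y => y % e = i)).image (fun y => y / e)).image
      (fun k => i + e * k) := by
  rw [Finset.image_image]
  ext x
  simp only [Finset.mem_image, Finset.mem_filter, Function.comp]
  constructor
  · rintro ⟨hx, hm⟩
    exact ⟨x, ⟨hx, hm⟩, by rw [← hm, Nat.mod_add_div]⟩
  · rintro ⟨y, ⟨hy, hm⟩, rfl⟩
    constructor
    · rwa [← hm, Nat.mod_add_div]
    · rw [Nat.add_mul_mod_self_left, Nat.mod_eq_of_lt (by rw [← hm]; exact Nat.mod_lt _ he)]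

lemma noEHook_core_eq {e : ℕ} (he : 0 < e) {C : Finset ℕ} (h : NoEHook e C) :
    coreOfCounts e (cnt e C) = C := by
  ext x
  rw [mem_coreOfCounts he]
  set i := x % e with hi
  set S := (C.filter (fun y => y % e = i)).image (fun y => y / e) with hS
  have hinj : Set.InjOn (fun y => y / e) ↑(C.filter (fun y => y % e = i)) := by
    intro a ha b hb hab
    simp only [Finset.coe_filter, Set.mem_setOf_eq] at ha hb
    simp only at hab
    exact eq_of_div_mod hab (ha.2.trans hb.2.symm)
  have hcardS : S.card = cnt e C i := by
    rw [hS, Finset.card_image_of_injOn hinj, cnt]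
  have hdS : ∀ k, k + 1 ∈ S → k ∈ S := by
    intro k hk
    simp only [hS, Finset.mem_image, Finset.mem_filter] at hk ⊢
    obtain ⟨y, ⟨hy, hm⟩, hdiv⟩ := hk
    have hye : e ≤ y := (Nat.one_le_div_iff he).mp (by omega)
    refine ⟨y - e, ⟨h y hy hye, ?_⟩, ?_⟩
    · rw [sub_mod_self hye, hm]
    · have h3 := sub_div_self he hye
      omega
  have hSrange : S = Finset.range (cnt e C i) := by rw [downward_eq_range hdS, hcardS]
  constructor
  · intro hlt
    have : x / e ∈ S := by rw [hSrange]; exact Finset.mem_range.mpr hlt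
    simp only [hS, Finset.mem_image, Finset.mem_filter] at this
    obtain ⟨y, ⟨hy, hm⟩, hdiv⟩ := this
    have : y = x := eq_of_div_mod hdiv hm
    rwa [← this]
  · intro hx
    have : x / e ∈ S := by
      simp only [hS, Finset.mem_image, Finset.mem_filter]
      exact ⟨x, ⟨hx, rfl⟩, rfl⟩
    rw [hSrange] at this
    exact Finset.mem_range.mp this

-- ===== chunk 2 =====

lemma cnt_hookRel {e : ℕ} {B B' : Finset ℕ} (h : hookRel e B B') : cnt e B' = cnt e B := by
  obtain ⟨y, hy, hey, hnot, rfl⟩ := h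
  funext i
  unfold cnt
  have hne : y - e ∉ B.erase y := fun hc => hnot (Finset.mem_of_mem_erase hc)
  rw [Finset.filter_insert]
  have hkey : (y - e) % e = y % e := sub_mod_self hey
  by_cases hc : y % e = i
  · rw [if_pos (hkey.trans hc)]
    rw [Finset.card_insert_of_notMem (fun hmem => hne (Finset.mem_filter.mp hmem).1)]
    have : B.filter (fun x => x % e = i) = insert y ((B.erase y).filter (fun x => x % e = i)) := by
      rw [Finset.filter_erase]
      rw [Finset.insert_erase]
      exact Finset.mem_filter.mpr ⟨hy, hc⟩
    rw [this, Finset.card_insert_of_notMem (fun hmem => (Finset.mem_erase.mp (Finset.mem_filter.mp hmem).1).1 rfl)]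
  · rw [if_neg (fun hc2 => hc (hkey.symm.trans hc2))]
    rw [Finset.filter_erase, Finset.erase_eq_of_notMem]
    intro hmem
    exact hc (Finset.mem_filter.mp hmem).2

lemma sum_hookRel {e : ℕ} (he : 0 < e) {B B' : Finset ℕ} (h : hookRel e B B') :
    B'.sum id + e = B.sum id := by
  obtain ⟨y, hy, hey, hnot, rfl⟩ := h
  have hne : y - e ∉ B.erase y := fun hc => hnot (Finset.mem_of_mem_erase hc)
  rw [Finset.sum_insert hne]
  have h2 := Finset.sum_erase_add B id hy
  simp only [id] at *
  omega

lemma core_exists {e : ℕ} (he : 0 < e) {C : Finset ℕ} (hC : ¬NoEHook e C) :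
    ∃ C', hookRel e C C' := by
  unfold NoEHook at hC
  push_neg at hC
  obtain ⟨y, hy, hey, hnot⟩ := hC
  exact ⟨_, y, hy, hey, hnot, rfl⟩

lemma toCore_aux {e : ℕ} (he : 0 < e) :
    ∀ n (B : Finset ℕ), B.sum id ≤ n →
      Relation.ReflTransGen (hookRel e) B
        (coreOfCounts e (cnt e B)) := by
  intro n
  induction n with
  | zero =>
    intro B hB
    by_cases hC : NoEHook e B
    · rw [noEHook_core_eq he hC]
    · obtain ⟨B', hB'⟩ := core_exists he hC
      have := sum_hookRel he hB'
      omega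
  | succ n ih =>
    intro B hB
    by_cases hC : NoEHook e B
    · rw [noEHook_core_eq he hC]
    · obtain ⟨B', hB'⟩ := core_exists he hC
      have hsum := sum_hookRel he hB'
      have hcnt := cnt_hookRel hB'
      have : Relation.ReflTransGen (hookRel e) B' _ := ih B' (by omega)
      rw [hcnt] at this
      exact Relation.ReflTransGen.head hB' this

-- ===== shift1 =====

def shift1 (B : Finset ℕ) : Finset ℕ := insert 0 (B.image (· + 1))

lemma zero_not_mem_image (B : Finset ℕ) : 0 ∉ B.image (· + 1) := by
  simp

lemma card_shift1 (B : Finset ℕ) : (shift1 B).card = B.card + 1 := by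
  rw [shift1, Finset.card_insert_of_notMem (zero_not_mem_image B),
    Finset.card_image_of_injective _ (add_left_injective 1)]

lemma sort_image_strictMono {f : ℕ → ℕ} (hf : StrictMono f) (s : Finset ℕ) :
    (s.image f).sort (· ≤ ·) = (s.sort (· ≤ ·)).map f := by
  refine List.Perm.eq_of_pairwise' (r := (· ≤ ·)) ?_ ?_ ?_
  rotate_right
  · rw [← Multiset.coe_eq_coe]
    have h1 : ((s.image f).sort (· ≤ ·) : Multiset ℕ) = (s.image f).val := Finset.sort_eq _ _
    have h2 : (s.image f).val = s.val.map f :=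
      Finset.image_val_of_injOn (fun a _ b _ h => hf.injective h)
    have h3 : ((s.sort (· ≤ ·) : List ℕ) : Multiset ℕ) = s.val := Finset.sort_eq _ _
    rw [h1, h2, ← h3]
    rfl
  · exact Finset.pairwise_sort _ _
  · exact List.Pairwise.map f (fun a b hab => hf.monotone hab) (Finset.pairwise_sort _ _)

lemma sort_shift1 (B : Finset ℕ) :
    (shift1 B).sort (· ≤ ·) = 0 :: (B.sort (· ≤ ·)).map (· + 1) := by
  have h := Finset.sort_insert (α := ℕ) (· ≤ ·) (a := 0) (s := B.image (· + 1))
    (fun b _ => Nat.zero_le b) (zero_not_mem_image B)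
  rw [shift1, h, sort_image_strictMono (fun a b hab => by omega)]

lemma betaToPart_shift1 (B : Finset ℕ) : betaToPart (shift1 B) = betaToPart B := by
  funext j
  unfold betaToPart
  rw [card_shift1, sort_shift1]
  rcases lt_trichotomy j B.card with hj | rfl | hj
  · rw [if_pos (by omega), if_pos hj]
    have hidx : B.card + 1 - 1 - j = (B.card - 1 - j) + 1 := by omega
    rw [hidx]
    simp only [List.getD_cons_succ]
    have hlen : B.card - 1 - j < (B.sort (· ≤ ·)).length := by
      rw [Finset.length_sort]; omega
    rw [List.getD_eq_getElem _ _ (by simpa using hlen), List.getD_eq_getElem _ _ hlen]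
    simp only [List.getElem_map]
    omega
  · rw [if_pos (by omega), if_neg (by omega)]
    have hidx : B.card + 1 - 1 - B.card = 0 := by omega
    rw [hidx]
    simp
  · rw [if_neg (by omega), if_neg (by omega)]

-- ===== evens =====

def evensUpTo (m : ℕ) : Finset ℕ := (Finset.range (m + 1)).image (fun j => 2 * j)

lemma betaToPart_evensUpTo (m : ℕ) : betaToPart (evensUpTo m) = stair m := by
  funext j
  unfold betaToPart evensUpTo stair
  have hcard : ((Finset.range (m + 1)).image (fun j => 2 * j)).card = m + 1 := by
    rw [Finset.card_image_of_injective _ (fun a b hab => by omega), Finset.card_range]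
  rw [hcard, sort_image_strictMono (fun a b hab => by omega), Finset.sort_range]
  by_cases hj : j < m + 1
  · rw [if_pos hj]
    have hidx : m + 1 - 1 - j = m - j := by omega
    rw [hidx]
    have hlen : m - j < (List.range (m + 1)).length := by simp
    rw [List.getD_eq_getElem _ _ (by simpa using hlen)]
    simp only [List.getElem_map, List.getElem_range]
    omega
  · rw [if_neg hj]
    omega


-- ===== chunk 3: shifts and counts =====

lemma mem_shift1 {B : Finset ℕ} {x : ℕ} :
    x ∈ shift1 B ↔ x = 0 ∨ (1 ≤ x ∧ x - 1 ∈ B) := by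
  simp only [shift1, Finset.mem_insert, Finset.mem_image]
  constructor
  · rintro (rfl | ⟨b, hb, rfl⟩)
    · exact Or.inl rfl
    · exact Or.inr ⟨by omega, by simpa using hb⟩
  · rintro (rfl | ⟨h1, h2⟩)
    · exact Or.inl rfl
    · exact Or.inr ⟨x - 1, h2, by omega⟩

lemma shiftIter_eq (k : ℕ) (B : Finset ℕ) :
    shift1^[k] B = Finset.range k ∪ B.image (· + k) := by
  induction k with
  | zero =>
    ext x
    simp
  | succ k ih =>
    rw [Function.iterate_succ_apply', ih]
    ext x
    rw [mem_shift1]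
    simp only [Finset.mem_union, Finset.mem_range, Finset.mem_image]
    constructor
    · rintro (rfl | ⟨h1, (h2 | ⟨b, hb, hbe⟩)⟩)
      · exact Or.inl (by omega)
      · exact Or.inl (by omega)
      · exact Or.inr ⟨b, hb, by omega⟩
    · rintro (h | ⟨b, hb, rfl⟩)
      · rcases Nat.eq_zero_or_pos x with rfl | hx
        · exact Or.inl rfl
        · exact Or.inr ⟨hx, Or.inl (by omega)⟩
      · exact Or.inr ⟨by omega, Or.inr ⟨b, hb, by omega⟩⟩

lemma cnt_zero_of_ge {e : ℕ} (he : 0 < e) (B : Finset ℕ) {i : ℕ} (hi : e ≤ i) :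
    cnt e B i = 0 := by
  unfold cnt
  rw [Finset.card_eq_zero, Finset.filter_eq_empty_iff]
  intro x _
  have := Nat.mod_lt x he
  omega

lemma card_filter_image {f : ℕ → ℕ} (hf : Function.Injective f) (B : Finset ℕ)
    (p : ℕ → Prop) [DecidablePred p] :
    ((B.image f).filter p).card = (B.filter (p ∘ f)).card := by
  have h1 : B.image f = B.map ⟨f, hf⟩ := by
    rw [Finset.map_eq_image]
    rfl
  rw [h1, Finset.filter_map, Finset.card_map]
  rfl

lemma filter_mod_range {e i : ℕ} (hi : i < e) :
    (Finset.range e).filter (fun x => x % e = i) = {i} := by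
  ext x
  simp only [Finset.mem_filter, Finset.mem_range, Finset.mem_singleton]
  constructor
  · rintro ⟨h1, h2⟩
    rw [← h2, Nat.mod_eq_of_lt h1]
  · rintro rfl
    exact ⟨hi, Nat.mod_eq_of_lt hi⟩

lemma cnt_shiftIter_e {e : ℕ} (B : Finset ℕ) {i : ℕ} (hi : i < e) :
    cnt e (shift1^[e] B) i = cnt e B i + 1 := by
  rw [shiftIter_eq]
  unfold cnt
  rw [Finset.filter_union, Finset.card_union_of_disjoint, filter_mod_range hi,
    Finset.card_singleton, card_filter_image (fun a b hab => by omega)]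
  · have : B.filter ((fun x => x % e = i) ∘ (· + e)) = B.filter (fun x => x % e = i) := by
      apply Finset.filter_congr
      intro x _
      simp [Function.comp, Nat.add_mod_right]
    rw [this]
    omega
  · apply Finset.disjoint_filter_filter
    rw [Finset.disjoint_left]
    intro x hx hx2
    simp only [Finset.mem_range] at hx
    simp only [Finset.mem_image] at hx2
    obtain ⟨b, _, rfl⟩ := hx2
    omega

lemma mod_sub_one {e b i : ℕ} (he : 1 < e) (hi : i < e) :
    (b + 1) % e = i ↔ b % e = (i + (e - 1)) % e := by
  have hb : b % e < e := Nat.mod_lt b (by omega)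
  have h1 : (b + 1) % e = (b % e + 1) % e := by
    conv_lhs => rw [Nat.add_mod, Nat.mod_eq_of_lt he]
  rw [h1]
  rcases Nat.lt_or_ge (b % e) (e - 1) with hr | hr
  · rw [Nat.mod_eq_of_lt (show b % e + 1 < e from by omega)]
    rcases Nat.eq_zero_or_pos i with rfl | hip
    · rw [Nat.zero_add, Nat.mod_eq_of_lt (show e - 1 < e from by omega)]
      omega
    · rw [Nat.mod_eq_sub_mod (by omega : e ≤ i + (e - 1)),
        show i + (e - 1) - e = i - 1 from by omega,
        Nat.mod_eq_of_lt (show i - 1 < e from by omega)]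
      omega
  · have hbe : b % e = e - 1 := by omega
    rw [hbe, show e - 1 + 1 = e from by omega, Nat.mod_self]
    rcases Nat.eq_zero_or_pos i with rfl | hip
    · rw [Nat.zero_add, Nat.mod_eq_of_lt (show e - 1 < e from by omega)]
      omega
    · rw [Nat.mod_eq_sub_mod (by omega : e ≤ i + (e - 1)),
        show i + (e - 1) - e = i - 1 from by omega,
        Nat.mod_eq_of_lt (show i - 1 < e from by omega)]
      omega

lemma cnt_shift1 {e : ℕ} (he : 1 < e) (B : Finset ℕ) {i : ℕ} (hi : i < e) :
    cnt e (shift1 B) i = (if i = 0 then 1 else 0) + cnt e B ((i + (e - 1)) % e) := by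
  unfold cnt shift1
  rw [Finset.filter_insert]
  have himage : ((B.image (· + 1)).filter (fun x => x % e = i)).card
      = (B.filter (fun x => x % e = (i + (e - 1)) % e)).card := by
    rw [card_filter_image (fun a b hab => by omega)]
    congr 1
    apply Finset.filter_congr
    intro x _
    simpa [Function.comp] using mod_sub_one (b := x) he hi
  by_cases hi0 : i = 0
  · subst hi0
    rw [if_pos (Nat.zero_mod e), if_pos rfl,
      Finset.card_insert_of_notMem (fun h => by
        have := Finset.mem_of_mem_filter 0 h
        simp at this)]
    omega
  · rw [if_neg (by rw [Nat.zero_mod]; exact fun h => hi0 h.symm), if_neg hi0]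
    omega

lemma cnt_coreOfCounts {e : ℕ} (he : 0 < e) (n : ℕ → ℕ) {i : ℕ} (hi : i < e) :
    cnt e (coreOfCounts e n) i = n i := by
  unfold cnt
  have hset : (coreOfCounts e n).filter (fun x => x % e = i)
      = (Finset.range (n i)).image (fun k => i + e * k) := by
    ext x
    simp only [Finset.mem_filter, mem_coreOfCounts he, Finset.mem_image, Finset.mem_range]
    constructor
    · rintro ⟨hx, hm⟩
      exact ⟨x / e, by rwa [hm] at hx, by rw [← hm, Nat.mod_add_div]⟩
    · rintro ⟨k, hk, rfl⟩
      rw [Nat.add_mul_mod_self_left, Nat.mod_eq_of_lt hi, Nat.add_mul_div_left _ _ he,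
        Nat.div_eq_of_lt hi]
      exact ⟨by omega, rfl⟩
  rw [hset, Finset.card_image_of_injective _
    (fun a b hab => Nat.eq_of_mul_eq_mul_left he (Nat.add_left_cancel hab)),
    Finset.card_range]

lemma cnt_core_funext {e : ℕ} (he : 0 < e) (B : Finset ℕ) :
    cnt e (coreOfCounts e (cnt e B)) = cnt e B := by
  funext i
  rcases Nat.lt_or_ge i e with hi | hi
  · exact cnt_coreOfCounts he _ hi
  · rw [cnt_zero_of_ge he _ hi, cnt_zero_of_ge he _ hi]

lemma noEHook_shift1 {e : ℕ} (he : 0 < e) {C : Finset ℕ} (h : NoEHook e C) :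
    NoEHook e (shift1 C) := by
  intro y hy hey
  rw [mem_shift1] at hy ⊢
  rcases hy with rfl | ⟨h1, h2⟩
  · omega
  · rcases Nat.lt_or_ge (y - 1) e with hb | hb
    · left
      omega
    · right
      refine ⟨by omega, ?_⟩
      have hmem := h (y - 1) h2 hb
      rwa [show y - e - 1 = y - 1 - e from by omega]

lemma core_shift1 {e : ℕ} (he : 1 < e) (B : Finset ℕ) :
    coreOfCounts e (cnt e (shift1 B)) = shift1 (coreOfCounts e (cnt e B)) := by
  have h0 : 0 < e := by omega
  have h1 : NoEHook e (shift1 (coreOfCounts e (cnt e B))) :=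
    noEHook_shift1 h0 (noEHook_coreOfCounts h0 _)
  rw [← noEHook_core_eq h0 h1]
  apply coreOfCounts_congr h0
  intro i hi
  rw [cnt_shift1 he B hi, cnt_shift1 he _ hi, cnt_core_funext h0]

def Inv (e : ℕ) (B : Finset ℕ) : Prop :=
  ∃ s, betaToPart (coreOfCounts e (cnt e B)) = stair s

lemma inv_shift1 {e : ℕ} (he : 1 < e) (B : Finset ℕ) : Inv e (shift1 B) ↔ Inv e B := by
  unfold Inv
  rw [core_shift1 he, betaToPart_shift1]

lemma inv_shiftIter {e : ℕ} (he : 1 < e) (k : ℕ) (B : Finset ℕ) :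
    Inv e (shift1^[k] B) ↔ Inv e B := by
  induction k with
  | zero => rfl
  | succ k ih => rw [Function.iterate_succ_apply', inv_shift1 he, ih]

lemma inv_plus_one {e : ℕ} (he : 1 < e) {B B' : Finset ℕ}
    (h : ∀ i < e, cnt e B i = cnt e B' i + 1) : Inv e B ↔ Inv e B' := by
  have h0 : 0 < e := by omega
  have hcc : coreOfCounts e (cnt e B) = coreOfCounts e (cnt e (shift1^[e] B')) := by
    apply coreOfCounts_congr h0
    intro i hi
    rw [cnt_shiftIter_e B' hi, h i hi]
  have h2 : Inv e B ↔ Inv e (shift1^[e] B') := by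
    unfold Inv
    rw [hcc]
  rw [h2, inv_shiftIter he e B']

-- ===== chunk 4: abacus to beta-set =====

def Valid (A : Set ℤ) (N : ℤ) : Prop :=
  (∀ x : ℤ, x < N → x ∈ A) ∧ (A ∩ Set.Ici N).Finite

noncomputable def betaOf (A : Set ℤ) (N : ℤ) : Finset ℕ :=
  letI := Classical.dec (A ∩ Set.Ici N).Finite
  if h : (A ∩ Set.Ici N).Finite then h.toFinset.image (fun z => (z - N).toNat) else ∅

lemma valid_mono {A : Set ℤ} {N N' : ℤ} (hv : Valid A N) (h : N' ≤ N) : Valid A N' := by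
  refine ⟨fun x hx => hv.1 x (by omega), ?_⟩
  have hsub : A ∩ Set.Ici N' ⊆ (A ∩ Set.Ici N) ∪ Set.Ico N' N := by
    rintro x ⟨hxA, hx⟩
    simp only [Set.mem_Ici] at hx
    rcases lt_or_ge x N with h1 | h1
    · exact Or.inr ⟨hx, h1⟩
    · exact Or.inl ⟨hxA, h1⟩
  exact Set.Finite.subset (hv.2.union (Set.finite_Ico _ _)) hsub

lemma mem_betaOf {A : Set ℤ} {N : ℤ} (hfin : (A ∩ Set.Ici N).Finite) {b : ℕ} :
    b ∈ betaOf A N ↔ (N + b) ∈ A := by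
  unfold betaOf
  rw [dif_pos hfin]
  simp only [Finset.mem_image, Set.Finite.mem_toFinset, Set.mem_inter_iff, Set.mem_Ici]
  constructor
  · rintro ⟨z, ⟨hz, hzN⟩, heq⟩
    have hzb : z = N + b := by omega
    rwa [← hzb]
  · intro h
    exact ⟨N + b, ⟨h, by omega⟩, by omega⟩

lemma countP_gt_sorted : ∀ (L : List ℕ), L.Pairwise (· < ·) → ∀ (b : ℕ) (idx : ℕ),
    idx < L.length → b = L.getD idx 0 →
    L.countP (fun c => b < c) = L.length - idx - 1 := by
  intro L
  induction L with
  | nil => intro _ b idx h; simp at h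
  | cons a T ih =>
    intro hs b idx hidx hb
    rw [List.countP_cons]
    rcases idx with _ | idx
    · simp only [List.getD_cons_zero] at hb
      subst hb
      have hall : ∀ c ∈ T, b < c := fun c hc => (List.pairwise_cons.mp hs).1 c hc
      rw [List.countP_eq_length.mpr (fun c hc => decide_eq_true (hall c hc))]
      simp
    · simp only [List.getD_cons_succ] at hb
      have hT : T.Pairwise (· < ·) := (List.pairwise_cons.mp hs).2
      have hidx' : idx < T.length := by simpa using hidx
      rw [ih hT b idx hidx' hb]
      have hab : a < b := by
        have hmem : T.getD idx 0 ∈ T := by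
          rw [List.getD_eq_getElem _ _ hidx']
          exact List.getElem_mem _
        rw [hb]
        exact (List.pairwise_cons.mp hs).1 _ hmem
      have hdec : (decide (b < a)) = false := by
        simp only [decide_eq_false_iff_not]
        omega
      rw [hdec]
      simp only [Bool.false_eq_true, if_false, List.length_cons]
      omega

lemma countP_lt_sorted : ∀ (L : List ℕ), L.Pairwise (· < ·) → ∀ (b : ℕ) (idx : ℕ),
    idx < L.length → b = L.getD idx 0 →
    L.countP (fun c => c < b) = idx := by
  intro L
  induction L with
  | nil => intro _ b idx h; simp at h
  | cons a T ih =>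
    intro hs b idx hidx hb
    rw [List.countP_cons]
    rcases idx with _ | idx
    · simp only [List.getD_cons_zero] at hb
      subst hb
      have hzero : T.countP (fun c => c < b) = 0 := by
        rw [List.countP_eq_zero]
        intro c hc
        have h2 := (List.pairwise_cons.mp hs).1 c hc
        simp only [decide_eq_true_eq]
        omega
      rw [hzero]
      have hdec : (decide (b < b)) = false := by simp
      rw [hdec]
      simp
    · simp only [List.getD_cons_succ] at hb
      have hT : T.Pairwise (· < ·) := (List.pairwise_cons.mp hs).2
      have hidx' : idx < T.length := by simpa using hidx
      rw [ih hT b idx hidx' hb]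
      have hab : a < b := by
        have hmem : T.getD idx 0 ∈ T := by
          rw [List.getD_eq_getElem _ _ hidx']
          exact List.getElem_mem _
        rw [hb]
        exact (List.pairwise_cons.mp hs).1 _ hmem
      have hdec : (decide (a < b)) = true := decide_eq_true hab
      rw [hdec]
      simp

lemma card_filter_eq_countP (B : Finset ℕ) (p : ℕ → Prop) [DecidablePred p] :
    (B.filter p).card = (B.sort (· ≤ ·)).countP (fun c => decide (p c)) := by
  have h2 : ((B.sort (· ≤ ·) : List ℕ) : Multiset ℕ) = B.val := Finset.sort_eq _ _
  rw [Finset.card_def, Finset.filter_val, ← h2]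
  simp only [Multiset.filter_coe, Multiset.coe_card]
  rw [List.countP_eq_length_filter]

lemma injNadd (N : ℤ) : Function.Injective (fun c : ℕ => N + (c : ℤ)) := by
  intro a b hab
  simp only at hab
  omega

lemma ncard_above_mem {A : Set ℤ} {N : ℤ} (hv : Valid A N) {b : ℕ}
    (hb : (N + (b : ℤ)) ∈ A) :
    {y | y ∈ A ∧ (N + (b : ℤ)) < y}.ncard = ((betaOf A N).filter (fun c => b < c)).card := by
  have hfin := hv.2
  have hset : {y | y ∈ A ∧ (N + (b : ℤ)) < y}
      = (fun c : ℕ => N + (c : ℤ)) '' ↑((betaOf A N).filter (fun c => b < c)) := by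
    ext y
    simp only [Set.mem_setOf_eq, Set.mem_image, Finset.coe_filter, Set.mem_setOf_eq]
    constructor
    · rintro ⟨hyA, hyb⟩
      refine ⟨(y - N).toNat, ⟨?_, by omega⟩, by omega⟩
      rw [mem_betaOf hfin]
      have hy : N + (((y - N).toNat : ℤ)) = y := by omega
      rwa [hy]
    · rintro ⟨c, ⟨hc, hbc⟩, rfl⟩
      exact ⟨(mem_betaOf hfin).mp hc, by omega⟩
  rw [hset, Set.ncard_image_of_injective _ (injNadd N), Set.ncard_coe_finset]

lemma ncard_above_low {A : Set ℤ} {N : ℤ} (hv : Valid A N) {x : ℤ} (hx : x < N) :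
    {y | y ∈ A ∧ x < y}.ncard = (N - 1 - x).toNat + (betaOf A N).card := by
  have hfin := hv.2
  have hset : {y | y ∈ A ∧ x < y}
      = Set.Ico (x + 1) N ∪ ((fun c : ℕ => N + (c : ℤ)) '' ↑(betaOf A N)) := by
    ext y
    simp only [Set.mem_setOf_eq, Set.mem_union, Set.mem_Ico, Set.mem_image, Finset.mem_coe]
    constructor
    · rintro ⟨hyA, hxy⟩
      rcases lt_or_ge y N with h1 | h1
      · exact Or.inl ⟨by omega, h1⟩
      · refine Or.inr ⟨(y - N).toNat, ?_, by omega⟩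
        rw [mem_betaOf hfin]
        have hy : N + (((y - N).toNat : ℤ)) = y := by omega
        rwa [hy]
    · rintro (⟨h1, h2⟩ | ⟨c, hc, rfl⟩)
      · exact ⟨hv.1 y h2, by omega⟩
      · exact ⟨(mem_betaOf hfin).mp hc, by omega⟩
  have hcard : (betaOf A N).card = ((fun c : ℕ => N + (c : ℤ)) '' ↑(betaOf A N)).ncard := by
    rw [Set.ncard_image_of_injective _ (injNadd N), Set.ncard_coe_finset]
  rw [hset]
  have hdisj : Disjoint (Set.Ico (x + 1) N) ((fun c : ℕ => N + (c : ℤ)) '' ↑(betaOf A N)) := by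
    rw [Set.disjoint_left]
    rintro y ⟨_, h2⟩ ⟨c, _, hc⟩
    simp only at hc
    omega
  rw [Set.ncard_union_eq hdisj (Set.finite_Ico _ _) ((Finset.finite_toSet _).image _)]
  have hicoN : (Set.Ico (x + 1) N).ncard = (N - 1 - x).toNat := by
    rw [← Finset.coe_Ico, Set.ncard_coe_finset, Int.card_Ico]
    omega
  rw [hicoN, ← hcard]

lemma betaToPart_betaOf {A : Set ℤ} {N : ℤ} (hv : Valid A N) :
    betaToPart (betaOf A N) = abacusPartition A := by
  have hfin := hv.2
  set B := betaOf A N with hB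
  set L := B.sort (· ≤ ·) with hL
  set k := B.card with hk
  have hLlen : L.length = k := Finset.length_sort _
  have hLs : L.Pairwise (· < ·) := (Finset.sortedLT_sort B).pairwise
  funext j
  rcases lt_or_ge j k with hj | hj
  · -- j < k
    set b := L.getD (k - 1 - j) 0 with hbdef
    have hidxlt : k - 1 - j < L.length := by omega
    have hbL : b ∈ L := by
      rw [hbdef, List.getD_eq_getElem _ _ hidxlt]
      exact List.getElem_mem _
    have hbB : b ∈ B := (Finset.mem_sort _).mp hbL
    have hbA : (N + (b : ℤ)) ∈ A := (mem_betaOf hfin).mp hbB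
    have hcount : {y | y ∈ A ∧ (N + (b : ℤ)) < y}.ncard = j := by
      rw [ncard_above_mem hv hbA, card_filter_eq_countP,
        countP_gt_sorted L hLs b (k - 1 - j) hidxlt hbdef, hLlen]
      omega
    have hbead : {x | x ∈ A ∧ {y | y ∈ A ∧ x < y}.ncard = j} = {(N + (b : ℤ))} := by
      ext x
      simp only [Set.mem_setOf_eq, Set.mem_singleton_iff]
      constructor
      · rintro ⟨hxA, hxc⟩
        rcases lt_or_ge x N with hx | hx
        · rw [ncard_above_low hv hx, ← hB] at hxc
          omega
        · have hxform : x = N + (((x - N).toNat : ℤ)) := by omega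
          set c := (x - N).toNat with hc
          have hcB : c ∈ B := by
            rw [hB, mem_betaOf hfin, ← hxform]
            exact hxA
          rw [hxform] at hxc
          rw [ncard_above_mem hv (by rwa [← hxform])] at hxc
          rw [card_filter_eq_countP] at hxc
          have hcL : c ∈ L := (Finset.mem_sort _).mpr hcB
          obtain ⟨idx, hidx, hcidx⟩ := List.mem_iff_getElem.mp hcL
          have hcgd : c = L.getD idx 0 := by rw [List.getD_eq_getElem _ _ hidx, hcidx]
          rw [countP_gt_sorted L hLs c idx hidx hcgd] at hxc
          have hidxeq : idx = k - 1 - j := by omega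
          rw [hxform, hcgd, hidxeq]
      · rintro rfl
        exact ⟨hbA, hcount⟩
    have hbeadval : abacusBead A j = N + (b : ℤ) := by
      rw [abacusBead, hbead, csSup_singleton]
    have hholes : {y | y < abacusBead A j ∧ y ∉ A}
        = Set.Ico N (N + (b : ℤ))
          \ ((fun c : ℕ => N + (c : ℤ)) '' ↑(B.filter (fun c => c < b))) := by
      rw [hbeadval]
      ext y
      simp only [Set.mem_setOf_eq, Set.mem_diff, Set.mem_Ico, Set.mem_image, Finset.coe_filter,
        Set.mem_setOf_eq]
      constructor
      · rintro ⟨hy1, hy2⟩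
        have hyN : N ≤ y := by
          by_contra hcon
          exact hy2 (hv.1 y (by omega))
        refine ⟨⟨hyN, hy1⟩, ?_⟩
        rintro ⟨c, ⟨hcB, _⟩, rfl⟩
        exact hy2 ((mem_betaOf hfin).mp hcB)
      · rintro ⟨⟨hy1, hy2⟩, hy3⟩
        refine ⟨hy2, fun hyA => hy3 ?_⟩
        refine ⟨(y - N).toNat, ⟨?_, by omega⟩, by omega⟩
        rw [hB, mem_betaOf hfin]
        have hy : N + (((y - N).toNat : ℤ)) = y := by omega
        rwa [hy]
    have hsubset : ((fun c : ℕ => N + (c : ℤ)) '' ↑(B.filter (fun c => c < b)))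
        ⊆ Set.Ico N (N + (b : ℤ)) := by
      rintro y ⟨c, hc, hcy⟩
      simp only [Finset.coe_filter, Set.mem_setOf_eq] at hc
      simp only at hcy
      exact ⟨by omega, by omega⟩
    have himgfin : ((fun c : ℕ => N + (c : ℤ)) '' ↑(B.filter (fun c => c < b))).Finite :=
      (Finset.finite_toSet _).image _
    have hlow : ((fun c : ℕ => N + (c : ℤ)) '' ↑(B.filter (fun c => c < b))).ncard
        = k - 1 - j := by
      rw [Set.ncard_image_of_injective _ (injNadd N), Set.ncard_coe_finset,
        card_filter_eq_countP, countP_lt_sorted L hLs b (k - 1 - j) hidxlt hbdef]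
    have hico : (Set.Ico N (N + (b : ℤ))).ncard = b := by
      rw [← Finset.coe_Ico, Set.ncard_coe_finset, Int.card_Ico]
      omega
    rw [abacusPartition, hholes, Set.ncard_diff hsubset himgfin, hlow, hico]
    rw [betaToPart, if_pos hj]
  · -- j ≥ k
    set x0 := N - 1 - ((j - k : ℕ) : ℤ) with hx0
    have hx0N : x0 < N := by omega
    have hx0A : x0 ∈ A := hv.1 x0 hx0N
    have hbead : {x | x ∈ A ∧ {y | y ∈ A ∧ x < y}.ncard = j} = {x0} := by
      ext x
      simp only [Set.mem_setOf_eq, Set.mem_singleton_iff]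
      constructor
      · rintro ⟨hxA, hxc⟩
        rcases lt_or_ge x N with hx | hx
        · rw [ncard_above_low hv hx, ← hB] at hxc
          omega
        · exfalso
          have hxform : x = N + (((x - N).toNat : ℤ)) := by omega
          set c := (x - N).toNat with hc
          have hcB : c ∈ B := by
            rw [hB, mem_betaOf hfin, ← hxform]
            exact hxA
          rw [hxform, ncard_above_mem hv (by rwa [← hxform])] at hxc
          rw [← hB] at hxc
          have hle : (B.filter (fun a => c < a)).card ≤ (B.erase c).card := by
            apply Finset.card_le_card
            intro z hz
            rw [Finset.mem_filter] at hz
            rw [Finset.mem_erase]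
            exact ⟨by omega, hz.1⟩
          rw [Finset.card_erase_of_mem hcB] at hle
          rw [hxc] at hle
          have hkpos : 0 < k := by
            rw [hk]
            exact Finset.card_pos.mpr ⟨c, hcB⟩
          omega
      · rintro rfl
        refine ⟨hx0A, ?_⟩
        rw [ncard_above_low hv hx0N, ← hB]
        omega
    have hbeadval : abacusBead A j = x0 := by
      rw [abacusBead, hbead, csSup_singleton]
    have hholes : {y | y < abacusBead A j ∧ y ∉ A} = (∅ : Set ℤ) := by
      rw [hbeadval]
      ext y
      simp only [Set.mem_setOf_eq, Set.mem_empty_iff_false, iff_false, not_and]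
      intro hy hyA
      exact hyA (hv.1 y (by omega))
    rw [abacusPartition, hholes, Set.ncard_empty, betaToPart, if_neg (by omega)]

-- ===== chunk 5: cutoff transfers and generalities =====

lemma betaOf_pred {A : Set ℤ} {N : ℤ} (hv : Valid A N) :
    betaOf A (N - 1) = shift1 (betaOf A N) := by
  have hfin := hv.2
  have hfin' : (A ∩ Set.Ici (N - 1)).Finite := (valid_mono hv (by omega)).2
  ext b
  rw [mem_betaOf hfin', mem_shift1]
  constructor
  · intro hb
    rcases Nat.eq_zero_or_pos b with rfl | hbpos
    · exact Or.inl rfl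
    · refine Or.inr ⟨hbpos, ?_⟩
      rw [mem_betaOf hfin]
      have hcast : N + ((b - 1 : ℕ) : ℤ) = N - 1 + b := by omega
      rwa [hcast]
  · rintro (rfl | ⟨h1, h2⟩)
    · have := hv.1 (N - 1) (by omega)
      simpa using this
    · rw [mem_betaOf hfin] at h2
      have hcast : N - 1 + (b : ℤ) = N + ((b - 1 : ℕ) : ℤ) := by omega
      rwa [hcast]

lemma inv_betaOf_le {e : ℕ} (he : 1 < e) {A : Set ℤ} {N : ℤ} (hv : Valid A N) (d : ℕ) :
    (Inv e (betaOf A (N - d)) ↔ Inv e (betaOf A N)) := by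
  induction d with
  | zero => simp
  | succ d ih =>
    have hstep : betaOf A (N - d - 1) = shift1 (betaOf A (N - d)) :=
      betaOf_pred (valid_mono hv (by omega))
    have harith : N - ((d : ℕ) + 1 : ℕ) = N - d - 1 := by push_cast; ring
    rw [harith, hstep, inv_shift1 he, ih]

lemma inv_betaOf_iff {e : ℕ} (he : 1 < e) {A : Set ℤ} {N N' : ℤ}
    (hv : Valid A N) (hv' : Valid A N') :
    (Inv e (betaOf A N) ↔ Inv e (betaOf A N')) := by
  rcases le_total N N' with h | h
  · have : N = N' - (N' - N).toNat := by omega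
    rw [this]
    exact inv_betaOf_le he hv' _
  · have : N' = N - (N - N').toNat := by omega
    conv_rhs => rw [this]
    exact (inv_betaOf_le he hv _).symm

lemma core_eq_of_path {e : ℕ} (he : 0 < e) {B C : Finset ℕ}
    (hpath : Relation.ReflTransGen (hookRel e) B C) (hC : NoEHook e C) :
    coreOfCounts e (cnt e B) = C := by
  have hcnt : cnt e B = cnt e C := by
    clear hC
    induction hpath with
    | refl => rfl
    | tail h1 h2 ih => rw [ih, ← cnt_hookRel h2]
  rw [hcnt, noEHook_core_eq he hC]

lemma noEHook_of_lt {e : ℕ} {C : Finset ℕ} (h : ∀ y ∈ C, y < e) : NoEHook e C := by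
  intro y hy hey
  exact absurd (h y hy) (by omega)

lemma betaToPart_shiftIter (k : ℕ) (B : Finset ℕ) :
    betaToPart (shift1^[k] B) = betaToPart B := by
  induction k with
  | zero => rfl
  | succ k ih => rw [Function.iterate_succ_apply', betaToPart_shift1, ih]

lemma mem_evensUpTo {m x : ℕ} : x ∈ evensUpTo m ↔ x % 2 = 0 ∧ x ≤ 2 * m := by
  unfold evensUpTo
  simp only [Finset.mem_image, Finset.mem_range]
  constructor
  · rintro ⟨j, hj, rfl⟩
    omega
  · rintro ⟨h1, h2⟩
    exact ⟨x / 2, by omega, by omega⟩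

-- ===== chunk 6: Inv for evensUpTo =====

lemma two_mul_mod_inj {e : ℕ} (he : e % 2 = 1) {r r' : ℕ} (hr : r < e) (hr' : r' < e)
    (h : (2 * r) % e = (2 * r') % e) : r = r' := by
  have key : ∀ u v : ℕ, u ≤ v → v < e → (2 * u) % e = (2 * v) % e → v - u = 0 := by
    intro u v huv hv hmod
    have hdvd : e ∣ 2 * v - 2 * u := (Nat.modEq_iff_dvd' (by omega)).mp hmod
    rw [show 2 * v - 2 * u = (v - u) * 2 from by omega] at hdvd
    have hcop : Nat.Coprime e 2 := Nat.coprime_two_right.mpr (Nat.odd_iff.mpr he)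
    have hdvd2 : e ∣ v - u := hcop.dvd_of_dvd_mul_right hdvd
    rcases Nat.eq_zero_or_pos (v - u) with h0 | h0
    · exact h0
    · exact absurd (Nat.le_of_dvd h0 hdvd2) (by omega)
  rcases le_total r r' with hle | hle
  · have := key r r' hle hr' h
    omega
  · have := key r' r hle hr h.symm
    omega

lemma mod_two_mul (e j : ℕ) : (2 * j) % e = (2 * (j % e)) % e := by
  conv_lhs => rw [Nat.mul_mod]
  conv_rhs => rw [Nat.mul_mod, Nat.mod_mod_of_dvd _ dvd_rfl]

lemma exists_half {e i : ℕ} (he : e % 2 = 1) (hi : i < e) :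
    ∃ i', i' < e ∧ (2 * i') % e = i := by
  rcases Nat.even_or_odd i with he2 | ho
  · have hev : i % 2 = 0 := Nat.even_iff.mp he2
    refine ⟨i / 2, by omega, ?_⟩
    rw [show 2 * (i / 2) = i from by omega, Nat.mod_eq_of_lt hi]
  · have hod : i % 2 = 1 := Nat.odd_iff.mp ho
    refine ⟨(i + e) / 2, by omega, ?_⟩
    rw [show 2 * ((i + e) / 2) = i + e from by omega, Nat.add_mod_right, Nat.mod_eq_of_lt hi]

lemma card_filter_Ico_mod {e : ℕ} (he : 0 < e) (a : ℕ) {i' : ℕ} (hi' : i' < e) :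
    ((Finset.Ico a (a + e)).filter (fun j => j % e = i')).card = 1 := by
  rw [Finset.card_eq_one]
  have hamod : a % e < e := Nat.mod_lt a he
  have hoff : (i' + e - a % e) % e < e := Nat.mod_lt _ he
  have hae := Nat.div_add_mod a e
  set j0 := a + ((i' + e - a % e) % e) with hj0def
  have hmod : j0 % e = i' := by
    rcases le_or_gt (a % e) i' with hle | hlt
    · have ht : (i' + e - a % e) % e = i' - a % e := by
        rw [Nat.mod_eq_sub_mod (by omega), show i' + e - a % e - e = i' - a % e from by omega,
          Nat.mod_eq_of_lt (by omega)]
      have hj0' : j0 = e * (a / e) + i' := by omega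
      rw [hj0', Nat.mul_add_mod, Nat.mod_eq_of_lt hi']
    · have ht : (i' + e - a % e) % e = i' + e - a % e := Nat.mod_eq_of_lt (by omega)
      have hmul : e * (a / e + 1) = e * (a / e) + e := by ring
      have hj0' : j0 = e * (a / e + 1) + i' := by omega
      rw [hj0', Nat.mul_add_mod, Nat.mod_eq_of_lt hi']
  have hmem : j0 ∈ Finset.Ico a (a + e) := Finset.mem_Ico.mpr ⟨by omega, by omega⟩
  refine ⟨j0, ?_⟩
  ext j
  simp only [Finset.mem_filter, Finset.mem_Ico, Finset.mem_singleton]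
  constructor
  · rintro ⟨⟨hja, hjb⟩, hjm⟩
    have hje : j % e = j0 % e := by rw [hjm, hmod]
    have key : ∀ u v : ℕ, u ≤ v → a ≤ u → v < a + e → u % e = v % e → v - u = 0 := by
      intro u v huv hu hv hmodeq
      have hdvd : e ∣ v - u := (Nat.modEq_iff_dvd' huv).mp hmodeq
      rcases Nat.eq_zero_or_pos (v - u) with h0 | h0
      · exact h0
      · exact absurd (Nat.le_of_dvd h0 hdvd) (by omega)
    rcases le_total j j0 with hle | hle
    · have h0 := key j j0 hle hja (by omega) hje
      omega
    · have h0 := key j0 j hle (by omega) hjb hje.symm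
      omega
  · rintro rfl
    exact ⟨Finset.mem_Ico.mp hmem, hmod⟩

lemma cnt_evensUpTo_eq {e m : ℕ} (he1 : 0 < e) (heo : e % 2 = 1) {i i' : ℕ} (hi'e : i' < e)
    (hi' : (2 * i') % e = i) :
    cnt e (evensUpTo m) i = ((Finset.range (m + 1)).filter (fun j => j % e = i')).card := by
  unfold cnt evensUpTo
  rw [card_filter_image (fun a b hab => by omega)]
  congr 1
  apply Finset.filter_congr
  intro j _
  constructor
  · intro h
    have h0 : (2 * j) % e = i := h
    have h2 : (2 * (j % e)) % e = (2 * i') % e := by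
      rw [← mod_two_mul, h0, ← hi']
    exact two_mul_mod_inj heo (Nat.mod_lt j he1) hi'e h2
  · intro h
    have h0 : (j : ℕ) % e = i' := h
    show (2 * j) % e = i
    rw [mod_two_mul, h0, hi']

lemma cnt_evensUpTo_step {e m : ℕ} (heo : e % 2 = 1) (he1 : 0 < e) (hm : e ≤ m) {i : ℕ}
    (hi : i < e) :
    cnt e (evensUpTo m) i = cnt e (evensUpTo (m - e)) i + 1 := by
  obtain ⟨i', hi'e, hi'⟩ := exists_half heo hi
  rw [cnt_evensUpTo_eq he1 heo hi'e hi', cnt_evensUpTo_eq he1 heo hi'e hi']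
  have hsplit : Finset.range (m + 1) = Finset.range (m - e + 1) ∪ Finset.Ico (m - e + 1) (m + 1) := by
    rw [Finset.range_eq_Ico, Finset.range_eq_Ico, Finset.Ico_union_Ico_eq_Ico (by omega) (by omega)]
  rw [hsplit, Finset.filter_union, Finset.card_union_of_disjoint]
  · congr 1
    have harith : m + 1 = (m - e + 1) + e := by omega
    rw [harith]
    exact card_filter_Ico_mod he1 _ hi'e
  · apply Finset.disjoint_filter_filter
    rw [Finset.disjoint_left]
    intro x hx hx2
    simp only [Finset.mem_range] at hx
    simp only [Finset.mem_Ico] at hx2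
    omega

def midD (e m r : ℕ) : Finset ℕ := (Finset.range (2 * m + 1)).filter
  (fun x => (x % 2 = 0 ∧ ¬(e < x ∧ x ≤ e + 2 * r)) ∨ (x % 2 = 1 ∧ x < 2 * r))

lemma mem_midD {e m r x : ℕ} : x ∈ midD e m r ↔ x < 2 * m + 1 ∧
    ((x % 2 = 0 ∧ ¬(e < x ∧ x ≤ e + 2 * r)) ∨ (x % 2 = 1 ∧ x < 2 * r)) := by
  unfold midD
  rw [Finset.mem_filter, Finset.mem_range]

lemma inv_evens_mid {e m : ℕ} (heo : e % 2 = 1) (he3 : 3 ≤ e) (h1 : e ≤ 2 * m) (h2 : m < e) :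
    Inv e (evensUpTo m) := by
  have he1 : 0 < e := by omega
  set K := 2 * m - e + 1 with hK
  set C := shift1^[K] (evensUpTo (e - 1 - m)) with hC
  have hCmem : ∀ x, x ∈ C ↔ (x < K ∨ (K ≤ x ∧ (x - K) % 2 = 0 ∧ x ≤ e - 1)) := by
    intro x
    rw [hC, shiftIter_eq]
    simp only [Finset.mem_union, Finset.mem_range, Finset.mem_image, mem_evensUpTo]
    constructor
    · rintro (h | ⟨b, hb, hbe⟩)
      · exact Or.inl h
      · right
        omega
    · rintro (h | ⟨hKx, hpar, hle⟩)
      · exact Or.inl h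
      · exact Or.inr ⟨x - K, by omega, by omega⟩
  have hCno : NoEHook e C := by
    apply noEHook_of_lt
    intro y hy
    rw [hCmem] at hy
    omega
  set R := m - (e - 1) / 2 with hR
  have hD0 : midD e m 0 = evensUpTo m := by
    ext x
    rw [mem_midD, mem_evensUpTo]
    omega
  have hDR : midD e m R = C := by
    ext x
    rw [mem_midD, hCmem]
    omega
  have hstep : ∀ r, r < R → hookRel e (midD e m r) (midD e m (r + 1)) := by
    intro r hr
    refine ⟨e + 2 * r + 1, ?_, by omega, ?_, ?_⟩
    · rw [mem_midD]
      omega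
    · rw [mem_midD]
      omega
    · ext x
      rw [mem_midD]
      simp only [Finset.mem_insert, Finset.mem_erase, mem_midD]
      omega
  have hpath : ∀ r, r ≤ R → Relation.ReflTransGen (hookRel e) (midD e m 0) (midD e m r) := by
    intro r
    induction r with
    | zero => intro _; exact Relation.ReflTransGen.refl
    | succ r ih => intro hr; exact (ih (by omega)).tail (hstep r (by omega))
  have hpathfull := hpath R le_rfl
  rw [hD0, hDR] at hpathfull
  have hcore : coreOfCounts e (cnt e (evensUpTo m)) = C := core_eq_of_path he1 hpathfull hCno
  refine ⟨e - 1 - m, ?_⟩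
  rw [hcore, hC, betaToPart_shiftIter, betaToPart_evensUpTo]

lemma inv_evensUpTo {e : ℕ} (heo : e % 2 = 1) (he3 : 3 ≤ e) (m : ℕ) :
    Inv e (evensUpTo m) := by
  induction m using Nat.strong_induction_on with
  | _ m ih =>
    rcases Nat.lt_or_ge (2 * m) e with hcase | hcase
    · have hno : NoEHook e (evensUpTo m) := by
        apply noEHook_of_lt
        intro y hy
        rw [mem_evensUpTo] at hy
        omega
      refine ⟨m, ?_⟩
      rw [noEHook_core_eq (show 0 < e from by omega) hno, betaToPart_evensUpTo]
    · rcases Nat.lt_or_ge m e with hm | hm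
      · exact inv_evens_mid heo he3 hcase hm
      · have hstep : ∀ i < e, cnt e (evensUpTo m) i = cnt e (evensUpTo (m - e)) i + 1 :=
          fun i hi => cnt_evensUpTo_step heo (by omega) hm hi
        rw [inv_plus_one (by omega) hstep]
        exact ih (m - e) (by omega)

-- ===== chunk 7: base case =====

lemma mem_abacusE_base {e : ℕ} (heo : e % 2 = 1) {c1 c2 x : ℤ} :
    x ∈ abacusE e {z : ℤ | z ≤ c1} {z : ℤ | z ≤ c2} ↔
      (x % 2 = 1 ∧ x ≤ 2 * c1 + e) ∨ (x % 2 = 0 ∧ x ≤ 2 * c2) := by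
  have heZ : (e : ℤ) % 2 = 1 := by omega
  unfold abacusE
  simp only [Set.mem_union, Set.mem_setOf_eq]
  constructor
  · rintro (⟨j, hj, rfl⟩ | ⟨j, hj, rfl⟩)
    · left
      omega
    · right
      omega
  · rintro (⟨hpar, hle⟩ | ⟨hpar, hle⟩)
    · exact Or.inl ⟨(x - e) / 2, by omega, by omega⟩
    · exact Or.inr ⟨x / 2, by omega, by omega⟩

lemma base_case {e : ℕ} (heo : e % 2 = 1) (he3 : 3 ≤ e) (c1 c2 : ℤ) {N : ℤ}
    (hv : Valid (abacusE e {z : ℤ | z ≤ c1} {z : ℤ | z ≤ c2}) N) :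
    Inv e (betaOf (abacusE e {z : ℤ | z ≤ c1} {z : ℤ | z ≤ c2}) N) := by
  have heZ : (e : ℤ) % 2 = 1 := by omega
  set A := abacusE e {z : ℤ | z ≤ c1} {z : ℤ | z ≤ c2} with hA
  have hmem : ∀ x : ℤ, x ∈ A ↔ (x % 2 = 1 ∧ x ≤ 2 * c1 + e) ∨ (x % 2 = 0 ∧ x ≤ 2 * c2) :=
    fun x => mem_abacusE_base heo
  set a := 2 * c1 + (e : ℤ) with ha
  set b := 2 * c2 with hb
  have hapar : a % 2 = 1 := by omega
  have hbpar : b % 2 = 0 := by omega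
  rcases lt_or_ge b a with hab | hab
  · set m := ((a - b - 1) / 2).toNat with hm
    have hvstar : Valid A (b + 1) := by
      constructor
      · intro x hx
        rw [hmem]
        omega
      · apply Set.Finite.subset (Set.finite_Icc (b + 1) a)
        rintro x ⟨hxA, hxN⟩
        rw [hmem] at hxA
        simp only [Set.mem_Ici] at hxN
        simp only [Set.mem_Icc]
        omega
    have hbeta : betaOf A (b + 1) = evensUpTo m := by
      ext c
      rw [mem_betaOf hvstar.2, mem_evensUpTo, hmem]
      omega
    have hinv := inv_evensUpTo heo he3 m
    rw [← hbeta] at hinv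
    rwa [inv_betaOf_iff (by omega) hv hvstar]
  · have hab' : a < b := by omega
    set m := ((b - a - 1) / 2).toNat with hm
    have hvstar : Valid A (a + 1) := by
      constructor
      · intro x hx
        rw [hmem]
        omega
      · apply Set.Finite.subset (Set.finite_Icc (a + 1) b)
        rintro x ⟨hxA, hxN⟩
        rw [hmem] at hxA
        simp only [Set.mem_Ici] at hxN
        simp only [Set.mem_Icc]
        omega
    have hbeta : betaOf A (a + 1) = evensUpTo m := by
      ext c
      rw [mem_betaOf hvstar.2, mem_evensUpTo, hmem]
      omega
    have hinv := inv_evensUpTo heo he3 m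
    rw [← hbeta] at hinv
    rwa [inv_betaOf_iff (by omega) hv hvstar]

-- ===== chunk 8: period removal =====

noncomputable def bead (e : ℕ) (B1 : Set ℤ) (M : ℤ) (l : ℕ) : ℤ :=
  letI := Classical.dec ((M - (l : ℤ)) ∈ B1)
  if (M - (l : ℤ)) ∈ B1 then 2 * (M - (l : ℤ)) + e else 2 * (M - (l : ℤ))

noncomputable def periodSet (e : ℕ) (B1 : Set ℤ) (M : ℤ) : Finset ℤ :=
  (Finset.range e).image (bead e B1 M)

lemma bead_cases (e : ℕ) (B1 : Set ℤ) (M : ℤ) (l : ℕ) :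
    (((M - (l : ℤ)) ∈ B1) ∧ bead e B1 M l = 2 * (M - (l : ℤ)) + e) ∨
      (((M - (l : ℤ)) ∉ B1) ∧ bead e B1 M l = 2 * (M - (l : ℤ))) := by
  unfold bead
  by_cases h : (M - (l : ℤ)) ∈ B1
  · left
    exact ⟨h, by rw [if_pos h]⟩
  · right
    exact ⟨h, by rw [if_neg h]⟩

lemma mem_periodSet {e : ℕ} {B1 : Set ℤ} {M z : ℤ} :
    z ∈ periodSet e B1 M ↔ ∃ l, l < e ∧ bead e B1 M l = z := by
  unfold periodSet
  simp only [Finset.mem_image, Finset.mem_range]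

lemma bead_lb {e : ℕ} {B1 : Set ℤ} {M : ℤ} {l : ℕ} (hl : l < e) :
    2 * M - 2 * e < bead e B1 M l := by
  rcases bead_cases e B1 M l with ⟨_, h⟩ | ⟨_, h⟩ <;> omega

lemma bead_mem {e : ℕ} {B1 B2 : Set ℤ} {M : ℤ}
    (hper : ∀ l : ℕ, l < e → (M - (l : ℤ)) ∈ B1 ∪ B2) {l : ℕ} (hl : l < e) :
    bead e B1 M l ∈ abacusE e B1 B2 := by
  rcases bead_cases e B1 M l with ⟨h1, h⟩ | ⟨h1, h⟩
  · exact Or.inl ⟨M - (l : ℤ), h1, h⟩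
  · rcases hper l hl with h2 | h2
    · exact absurd h2 h1
    · exact Or.inr ⟨M - (l : ℤ), h2, h⟩

lemma abacusE_sdiff {e : ℕ} (heo : e % 2 = 1) {B1 B2 : Set ℤ} {M : ℤ}
    (hper : ∀ l : ℕ, l < e → (M - (l : ℤ)) ∈ B1 ∪ B2) :
    abacusE e (B1 \ Set.Ioc (M - e) M) (B2 \ (Set.Ioc (M - e) M \ B1))
      = abacusE e B1 B2 \ ↑(periodSet e B1 M) := by
  have heZ : (e : ℤ) % 2 = 1 := by omega
  ext z
  simp only [abacusE, Set.mem_union, Set.mem_setOf_eq, Set.mem_diff, Set.mem_Ioc,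
    Finset.mem_coe]
  constructor
  · rintro (⟨j, ⟨hj1, hj2⟩, rfl⟩ | ⟨j, ⟨hj1, hj2⟩, rfl⟩)
    · refine ⟨Or.inl ⟨j, hj1, rfl⟩, ?_⟩
      rw [mem_periodSet]
      rintro ⟨l, hl, hbl⟩
      rcases bead_cases e B1 M l with ⟨hm, hb⟩ | ⟨hm, hb⟩
      · rw [hb] at hbl
        have hje : j = M - (l : ℤ) := by omega
        rw [hje] at hj2
        exact hj2 ⟨by omega, by omega⟩
      · rw [hb] at hbl
        omega
    · refine ⟨Or.inr ⟨j, hj1, rfl⟩, ?_⟩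
      rw [mem_periodSet]
      rintro ⟨l, hl, hbl⟩
      rcases bead_cases e B1 M l with ⟨hm, hb⟩ | ⟨hm, hb⟩
      · rw [hb] at hbl
        omega
      · rw [hb] at hbl
        have hje : j = M - (l : ℤ) := by omega
        rw [hje] at hj2
        exact hj2 ⟨⟨by omega, by omega⟩, hm⟩
  · rintro ⟨hzA, hzS⟩
    rw [mem_periodSet] at hzS
    rcases hzA with ⟨j, hj, rfl⟩ | ⟨j, hj, rfl⟩
    · refine Or.inl ⟨j, ⟨hj, ?_⟩, rfl⟩
      rintro ⟨hIoc1, hIoc2⟩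
      apply hzS
      refine ⟨(M - j).toNat, by omega, ?_⟩
      rcases bead_cases e B1 M ((M - j).toNat) with ⟨hm, hb⟩ | ⟨hm, hb⟩
      · rw [hb]
        omega
      · exfalso
        apply hm
        rw [show M - (((M - j).toNat : ℕ) : ℤ) = j from by omega]
        exact hj
    · refine Or.inr ⟨j, ⟨hj, ?_⟩, rfl⟩
      rintro ⟨⟨hIoc1, hIoc2⟩, hjB1⟩
      apply hzS
      refine ⟨(M - j).toNat, by omega, ?_⟩
      rcases bead_cases e B1 M ((M - j).toNat) with ⟨hm, hb⟩ | ⟨hm, hb⟩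
      · exfalso
        apply hjB1
        rw [← show M - (((M - j).toNat : ℕ) : ℤ) = j from by omega]
        exact hm
      · rw [hb]
        omega

lemma betaOf_sdiff {A : Set ℤ} {N : ℤ} (hfinA : (A ∩ Set.Ici N).Finite) (SS : Finset ℤ)
    (hSN : ∀ z ∈ SS, N ≤ z) :
    betaOf (A \ ↑SS) N = betaOf A N \ SS.image (fun z => (z - N).toNat) := by
  have hfin' : ((A \ ↑SS) ∩ Set.Ici N).Finite := by
    apply hfinA.subset
    rintro x ⟨⟨h1, _⟩, h2⟩
    exact ⟨h1, h2⟩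
  ext c
  rw [Finset.mem_sdiff, mem_betaOf hfin', mem_betaOf hfinA, Set.mem_diff]
  have himg : (c ∈ SS.image (fun z => (z - N).toNat)) ↔ ((N + (c : ℤ)) ∈ SS) := by
    simp only [Finset.mem_image]
    constructor
    · rintro ⟨z, hz, rfl⟩
      have hzN := hSN z hz
      rw [show N + (((z - N).toNat : ℕ) : ℤ) = z from by omega]
      exact hz
    · intro h
      exact ⟨N + c, h, by omega⟩
  rw [himg]
  exact Iff.rfl

lemma period_residue_inj {e : ℕ} (heo : e % 2 = 1) (he1 : 0 < e) {B1 : Set ℤ} {M N : ℤ}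
    (hSN : ∀ z ∈ periodSet e B1 M, N ≤ z) :
    ∀ l < e, ∀ l' < e,
      ((bead e B1 M l - N).toNat) % e = ((bead e B1 M l' - N).toNat) % e → l = l' := by
  have heZ : (e : ℤ) % 2 = 1 := by omega
  have hres : ∀ l, l < e → ((bead e B1 M l - N).toNat : ℤ) % e = (2 * (M - (l : ℤ)) - N) % e := by
    intro l hl
    have hNl := hSN (bead e B1 M l) (mem_periodSet.mpr ⟨l, hl, rfl⟩)
    rcases bead_cases e B1 M l with ⟨_, hb⟩ | ⟨_, hb⟩
    · rw [show ((bead e B1 M l - N).toNat : ℤ) = 2 * (M - (l : ℤ)) - N + (e : ℤ) * 1 from by omega,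
        Int.add_mul_emod_self_left]
    · rw [show ((bead e B1 M l - N).toNat : ℤ) = 2 * (M - (l : ℤ)) - N from by omega]
  have key : ∀ u v : ℕ, u ≤ v → v < e →
      ((bead e B1 M u - N).toNat) % e = ((bead e B1 M v - N).toNat) % e → v - u = 0 := by
    intro u v huv hv hmod
    have hmodZ : ((bead e B1 M u - N).toNat : ℤ) % e = ((bead e B1 M v - N).toNat : ℤ) % e := by
      have : (((bead e B1 M u - N).toNat % e : ℕ) : ℤ) = (((bead e B1 M v - N).toNat % e : ℕ) : ℤ) := by
        exact_mod_cast congrArg (Nat.cast : ℕ → ℤ) hmod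
      push_cast at this
      exact this
    rw [hres u (by omega), hres v hv] at hmodZ
    have hdvd : (e : ℤ) ∣ (2 * (M - (u : ℤ)) - N) - (2 * (M - (v : ℤ)) - N) :=
      Int.ModEq.dvd (Int.ModEq.symm hmodZ)
    have harith : (2 * (M - (u : ℤ)) - N) - (2 * (M - (v : ℤ)) - N) = ((2 * (v - u) : ℕ) : ℤ) := by
      push_cast
      omega
    rw [harith] at hdvd
    have hdvdN : e ∣ 2 * (v - u) := Int.natCast_dvd_natCast.mp hdvd
    rw [show 2 * (v - u) = (v - u) * 2 from by ring] at hdvdN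
    have hcop : Nat.Coprime e 2 := Nat.coprime_two_right.mpr (Nat.odd_iff.mpr heo)
    have hdvd2 : e ∣ v - u := hcop.dvd_of_dvd_mul_right hdvdN
    rcases Nat.eq_zero_or_pos (v - u) with h0 | h0
    · exact h0
    · exact absurd (Nat.le_of_dvd h0 hdvd2) (by omega)
  intro l hl l' hl' h
  rcases le_total l l' with hle | hle
  · have := key l l' hle hl' h
    omega
  · have := key l' l hle hl h.symm
    omega

lemma period_fiber_card {e : ℕ} (heo : e % 2 = 1) (he1 : 0 < e) {B1 : Set ℤ} {M N : ℤ}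
    (hSN : ∀ z ∈ periodSet e B1 M, N ≤ z) {i : ℕ} (hi : i < e) :
    (((periodSet e B1 M).image (fun z => (z - N).toNat)).filter (fun x => x % e = i)).card
      = 1 := by
  set ψ : ℕ → ℕ := fun l => (bead e B1 M l - N).toNat with hψ
  have hT : (periodSet e B1 M).image (fun z => (z - N).toNat) = (Finset.range e).image ψ := by
    unfold periodSet
    rw [Finset.image_image]
    rfl
  have hinj : ∀ l < e, ∀ l' < e, ψ l % e = ψ l' % e → l = l' :=
    period_residue_inj heo he1 hSN
  rw [hT]
  have hfilter : ((Finset.range e).image ψ).filter (fun x => x % e = i)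
      = ((Finset.range e).filter (fun l => ψ l % e = i)).image ψ :=
    Finset.filter_image
  rw [hfilter]
  rw [Finset.card_image_of_injOn]
  · -- card of fiber = 1
    have himg : ((Finset.range e).image (fun l => ψ l % e)) = Finset.range e := by
      apply Finset.eq_of_subset_of_card_le
      · intro x hx
        simp only [Finset.mem_image, Finset.mem_range] at hx ⊢
        obtain ⟨l, hl, rfl⟩ := hx
        exact Nat.mod_lt _ he1
      · rw [Finset.card_image_of_injOn, Finset.card_range]
        intro l hl l' hl' h
        simp only [Finset.coe_range, Set.mem_Iio] at hl hl'
        exact hinj l hl l' hl' h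
    have hiex : i ∈ (Finset.range e).image (fun l => ψ l % e) := by
      rw [himg]
      exact Finset.mem_range.mpr hi
    simp only [Finset.mem_image, Finset.mem_range] at hiex
    obtain ⟨l0, hl0, hl0i⟩ := hiex
    rw [Finset.card_eq_one]
    refine ⟨l0, ?_⟩
    ext l
    simp only [Finset.mem_filter, Finset.mem_range, Finset.mem_singleton]
    constructor
    · rintro ⟨hl, hli⟩
      exact hinj l hl l0 hl0 (by rw [hli, hl0i])
    · rintro rfl
      exact ⟨hl0, hl0i⟩
  · intro l hl l' hl' h
    simp only [Finset.coe_filter, Finset.mem_range, Set.mem_setOf_eq] at hl hl'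
    exact hinj l hl.1 l' hl'.1 (by rw [h])

lemma step_cnt {e : ℕ} (heo : e % 2 = 1) (he1 : 0 < e) {B1 : Set ℤ} {A : Set ℤ} {M N : ℤ}
    (hfinA : (A ∩ Set.Ici N).Finite)
    (hSA : ↑(periodSet e B1 M) ⊆ A)
    (hSN : ∀ z ∈ periodSet e B1 M, N ≤ z) :
    ∀ i < e, cnt e (betaOf A N) i
      = cnt e (betaOf (A \ ↑(periodSet e B1 M)) N) i + 1 := by
  intro i hi
  set T := (periodSet e B1 M).image (fun z => (z - N).toNat) with hTdef
  have hTB : T ⊆ betaOf A N := by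
    intro c hc
    simp only [hTdef, Finset.mem_image] at hc
    obtain ⟨z, hz, rfl⟩ := hc
    have hzN := hSN z hz
    rw [mem_betaOf hfinA, show N + (((z - N).toNat : ℕ) : ℤ) = z from by omega]
    exact hSA hz
  rw [betaOf_sdiff hfinA _ hSN]
  unfold cnt
  have hsplit : betaOf A N = (betaOf A N \ T) ∪ T := (Finset.sdiff_union_of_subset hTB).symm
  conv_lhs => rw [hsplit]
  rw [Finset.filter_union, Finset.card_union_of_disjoint
    (Finset.disjoint_filter_filter Finset.sdiff_disjoint)]
  congr 1
  exact period_fiber_card heo he1 hSN hi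

-- ===== chunk 9: main induction =====

lemma main_ind {e : ℕ} (heo : e % 2 = 1) (he3 : 3 ≤ e) {B1 B2 : Set ℤ}
    (htp : TotallyPeriodic e B1 B2) :
    ∀ N : ℤ, Valid (abacusE e B1 B2) N → Inv e (betaOf (abacusE e B1 B2) N) := by
  induction htp with
  | base c1 c2 =>
    intro N hv
    exact base_case heo he3 c1 c2 hv
  | step B1 B2 M hM hub hper hrow htp' ih =>
    intro N hv
    have he1 : 0 < e := by omega
    have hvA'' : Valid (abacusE e B1 B2) (min N (2 * M - 2 * e)) :=
      valid_mono hv (by omega)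
    have hSN : ∀ z ∈ periodSet e B1 M, min N (2 * M - 2 * e) ≤ z := by
      intro z hz
      rw [mem_periodSet] at hz
      obtain ⟨l, hl, rfl⟩ := hz
      have := bead_lb (B1 := B1) (M := M) hl
      omega
    have hSA : ↑(periodSet e B1 M) ⊆ abacusE e B1 B2 := by
      intro z hz
      rw [Finset.mem_coe, mem_periodSet] at hz
      obtain ⟨l, hl, rfl⟩ := hz
      exact bead_mem hper hl
    have hsd := abacusE_sdiff heo hper
    have hvA' : Valid (abacusE e B1 B2 \ ↑(periodSet e B1 M)) (min N (2 * M - 2 * e)) := by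
      constructor
      · intro x hx
        refine ⟨hvA''.1 x hx, ?_⟩
        intro hxS
        have := hSN x hxS
        omega
      · apply hvA''.2.subset
        rintro x ⟨⟨hx1, _⟩, hx2⟩
        exact ⟨hx1, hx2⟩
    have hih := ih (min N (2 * M - 2 * e)) (by rw [hsd]; exact hvA')
    rw [hsd] at hih
    have hcnt := step_cnt heo he1 hvA''.2 hSA hSN
    have hInvN'' : Inv e (betaOf (abacusE e B1 B2) (min N (2 * M - 2 * e))) := by
      rw [inv_plus_one (by omega) hcnt]
      exact hih
    rwa [inv_betaOf_iff (by omega) hv hvA'']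

-- ===== chunk 10: validity for symbol abaci =====

lemma symbolRow_low {f : ℕ → ℕ} (hf : IsPartitionFun f) (c : ℤ) :
    ∃ Nf : ℤ, ∀ x : ℤ, x ≤ Nf → x ∈ symbolRow f c := by
  obtain ⟨K, hK⟩ := hf.2
  refine ⟨c - K, ?_⟩
  intro x hx
  refine ⟨(c - x).toNat, ?_⟩
  have hKj : K ≤ (c - x).toNat := by omega
  rw [hK _ hKj]
  push_cast
  omega

lemma symbolRow_high {f : ℕ → ℕ} (hf : IsPartitionFun f) (c : ℤ) :
    ∀ x ∈ symbolRow f c, x ≤ (f 0 : ℤ) + c := by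
  rintro x ⟨j, rfl⟩
  have hle : f j ≤ f 0 := hf.1 (Nat.zero_le j)
  omega

lemma valid_abacusE {e : ℕ} (heo : e % 2 = 1) {f1 f2 : ℕ → ℕ}
    (h1 : IsPartitionFun f1) (h2 : IsPartitionFun f2) (c1 : ℤ) :
    ∃ N : ℤ, Valid (abacusE e (symbolRow f1 c1) (symbolRow f2 0)) N := by
  have heZ : (e : ℤ) % 2 = 1 := by omega
  obtain ⟨N1, hN1⟩ := symbolRow_low h1 c1
  obtain ⟨N2, hN2⟩ := symbolRow_low h2 0
  refine ⟨min (2 * N1 + e) (2 * N2), ?_, ?_⟩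
  · intro x hx
    rcases Int.even_or_odd x with hev | hod
    · obtain ⟨k, hk⟩ := hev
      exact Or.inr ⟨x / 2, hN2 _ (by omega), by omega⟩
    · obtain ⟨k, hk⟩ := hod
      exact Or.inl ⟨(x - e) / 2, hN1 _ (by omega), by omega⟩
  · apply Set.Finite.subset
      (Set.finite_Icc (min (2 * N1 + (e : ℤ)) (2 * N2))
        (max (2 * ((f1 0 : ℤ) + c1) + e) (2 * ((f2 0 : ℤ) + 0))))
    rintro x ⟨hxA, hxN⟩
    simp only [Set.mem_Ici] at hxN
    simp only [Set.mem_Icc]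
    rcases hxA with ⟨j, hj, rfl⟩ | ⟨j, hj, rfl⟩
    · have := symbolRow_high h1 c1 j hj
      constructor
      · exact hxN
      · have hmax := le_max_left (2 * ((f1 0 : ℤ) + c1) + e) (2 * ((f2 0 : ℤ) + 0))
        omega
    · have := symbolRow_high h2 0 j hj
      constructor
      · exact hxN
      · have hmax := le_max_right (2 * ((f1 0 : ℤ) + c1) + e) (2 * ((f2 0 : ℤ) + 0))
        omega

end StmtAux

/-- Let `e ≥ 3` be odd, `t ≥ 0` and `c = (t + (1−e)/2, 0)`. If `μ` is a bipartition
whose symbol `𝔅(μ, c)` is totally `e`-periodic, then the `e`-core of the partition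
`Φ_t(μ)` (realized as the partition associated to the abacus `𝔄_e(μ, c)`) is a
2-core, i.e. equals the staircase `Δ_s` for some `s ≥ 0`. -/
theorem stmt19 (e t : ℕ) (he : Odd e) (he3 : 3 ≤ e) (μ : (ℕ → ℕ) × (ℕ → ℕ))
    (h1 : IsPartitionFun μ.1) (h2 : IsPartitionFun μ.2)
    (htp : TotallyPeriodic e (symbolRow μ.1 ((t : ℤ) + (1 - (e : ℤ)) / 2))
      (symbolRow μ.2 0)) :
    ∃ (s : ℕ) (B : Finset ℕ),
      betaToPart B = abacusPartition (abacusE e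
        (symbolRow μ.1 ((t : ℤ) + (1 - (e : ℤ)) / 2)) (symbolRow μ.2 0)) ∧
      HasECore e B (stair s) := by
  have heo : e % 2 = 1 := Nat.odd_iff.mp he
  obtain ⟨N, hv⟩ := StmtAux.valid_abacusE heo h1 h2 ((t : ℤ) + (1 - (e : ℤ)) / 2)
  have hinv := StmtAux.main_ind heo he3 htp N hv
  obtain ⟨s, hs⟩ := hinv
  refine ⟨s, StmtAux.betaOf
    (abacusE e (symbolRow μ.1 ((t : ℤ) + (1 - (e : ℤ)) / 2)) (symbolRow μ.2 0)) N,
    StmtAux.betaToPart_betaOf hv, ?_⟩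
  exact ⟨StmtAux.coreOfCounts e (StmtAux.cnt e _),
    StmtAux.toCore_aux (by omega) _ _ le_rfl,
    StmtAux.noEHook_coreOfCounts (by omega) _, hs⟩
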